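/- Let f : ℝ^n → ℝ be continuous and μ-strongly convex with μ > 0, and let A ∈ ℝ^{p×n}. For y ∈ ℝ^p, let x*(A^T y) = argmax_{x} {⟨A^T y, x⟩ − f(x)}. Then the map y ↦ A·x*(A^T y) is Lipschitz continuous with constant λ_max(A^T A)/μ: for all y₁, y₂ ∈ ℝ^p, ‖A·x*(A^T y₁) − A·x*(A^T y₂)‖₂ ≤ (λ_max(A^T A)/μ)·‖y₁ − y₂‖₂. Equivalently, the dual function φ(y) = max_x {⟨A^T y, x⟩ − f(x)} is (λ_max(A^T A)/μ)-smooth. -/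

import Mathlib

open RealInnerProductSpace Matrix

section Aux

variable {E : Type*} [NormedAddCommGroup E] [InnerProductSpace ℝ E]

/-- For a `μ`-strongly convex `f`, a maximizer `x₀` of `x ↦ ⟪c, x⟫ - f x` satisfies the
quadratic growth bound `f x₀ + ⟪c, x - x₀⟫ + μ/2 ‖x - x₀‖² ≤ f x`. -/
lemma strong_max_ineq (f : E → ℝ) (μ : ℝ)
    (hsc : StrongConvexOn Set.univ μ f) (c x₀ : E)
    (hx₀ : IsMaxOn (fun x => ⟪c, x⟫ - f x) Set.univ x₀) (x : E) :
    f x₀ + ⟪c, x - x₀⟫ + μ / 2 * ‖x - x₀‖ ^ 2 ≤ f x := by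
  have h1 : ∀ t ∈ Set.Ioo (0:ℝ) 1,
      f x₀ + ⟪c, x - x₀⟫ + (1 - t) * (μ / 2 * ‖x - x₀‖ ^ 2) ≤ f x := by
    intro t ht
    have hconv := hsc.2 (Set.mem_univ x) (Set.mem_univ x₀) ht.1.le
      (by linarith [ht.2] : (0:ℝ) ≤ 1 - t) (by ring)
    have hmax : ⟪c, t • x + (1 - t) • x₀⟫ - f (t • x + (1 - t) • x₀)
        ≤ ⟪c, x₀⟫ - f x₀ := hx₀ (Set.mem_univ _)
    have hin1 : ⟪c, t • x + (1 - t) • x₀⟫ = t * ⟪c, x⟫ + (1 - t) * ⟪c, x₀⟫ := by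
      simp [inner_add_right, inner_smul_right]
    have hin2 : ⟪c, x - x₀⟫ = ⟪c, x⟫ - ⟪c, x₀⟫ := inner_sub_right _ _ _
    rw [hin1] at hmax
    rw [hin2]
    simp only [smul_eq_mul] at hconv
    have key : t * (f x₀ + (⟪c, x⟫ - ⟪c, x₀⟫) + (1 - t) * (μ / 2 * ‖x - x₀‖ ^ 2))
        ≤ t * f x := by nlinarith [hconv, hmax]
    exact le_of_mul_le_mul_left key ht.1
  have hlim : Filter.Tendsto
      (fun t : ℝ => f x₀ + ⟪c, x - x₀⟫ + (1 - t) * (μ / 2 * ‖x - x₀‖ ^ 2))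
      (nhdsWithin 0 (Set.Ioi 0))
      (nhds (f x₀ + ⟪c, x - x₀⟫ + (1 - 0) * (μ / 2 * ‖x - x₀‖ ^ 2))) := by
    apply Filter.Tendsto.mono_left _ nhdsWithin_le_nhds
    exact Continuous.tendsto (by continuity) 0
  have h := le_of_tendsto hlim
    (Filter.eventually_of_mem (Ioo_mem_nhdsGT_of_mem (by norm_num : (0:ℝ) ∈ Set.Ico (0:ℝ) 1)) h1)
  linarith [h]

end Aux

/-- For continuous `μ`-strongly convex `f`, the map `y ↦ A x*(Aᵀy)` (the gradient of the
dual function `φ(y) = max_x {⟨Aᵀy, x⟩ - f(x)}`) is Lipschitz with constant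
`λ_max(AᵀA)/μ`; equivalently, `φ` is `λ_max(AᵀA)/μ`-smooth. -/
theorem dual_gradient_lipschitz
    {n p : ℕ} (f : EuclideanSpace ℝ (Fin n) → ℝ) (μ : ℝ) (hμ : 0 < μ)
    (hcont : Continuous f) (hsc : StrongConvexOn Set.univ μ f)
    (A : Matrix (Fin p) (Fin n) ℝ)
    (xstar : EuclideanSpace ℝ (Fin p) → EuclideanSpace ℝ (Fin n))
    (hxstar : ∀ y, IsMaxOn (fun x => ⟪Matrix.toEuclideanLin Aᵀ y, x⟫ - f x) Set.univ
      (xstar y)) :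
    ∀ y₁ y₂ : EuclideanSpace ℝ (Fin p),
      ‖Matrix.toEuclideanLin A (xstar y₁) - Matrix.toEuclideanLin A (xstar y₂)‖
        ≤ sSup (spectrum ℝ (Aᵀ * A)) / μ * ‖y₁ - y₂‖ := by
  intro y₁ y₂
  classical
  set M := Aᵀ * A with hMdef
  have hH : M.IsHermitian := by
    have h := isHermitian_conjTranspose_mul_self A
    rwa [conjTranspose_eq_transpose_of_trivial] at h
  set lam := sSup (spectrum ℝ M) with hlamdef
  have hspec : spectrum ℝ M = Set.range hH.eigenvalues :=
    Matrix.IsHermitian.spectrum_real_eq_range_eigenvalues hH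
  have heig_le : ∀ i, hH.eigenvalues i ≤ lam := by
    intro i
    refine le_csSup ?_ (hH.eigenvalues_mem_spectrum_real i)
    rw [hspec]
    exact (Set.finite_range _).bddAbove
  have hPSD : M.PosSemidef := by
    have h := posSemidef_conjTranspose_mul_self A
    rwa [conjTranspose_eq_transpose_of_trivial] at h
  have heig_nonneg : ∀ i, 0 ≤ hH.eigenvalues i := fun i => hPSD.eigenvalues_nonneg i
  have hlam_nonneg : 0 ≤ lam := by
    rcases isEmpty_or_nonempty (Fin n) with h | h
    · have he : spectrum ℝ M = ∅ := by rw [hspec]; exact Set.range_eq_empty _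
      rw [hlamdef, he, Real.sSup_empty]
    · exact le_trans (heig_nonneg (Classical.arbitrary _)) (heig_le _)
  have hT : (toEuclideanLin M).IsSymmetric := isHermitian_iff_isSymmetric.1 hH
  have hTb : ∀ i, toEuclideanLin M (hH.eigenvectorBasis i)
      = hH.eigenvalues i • hH.eigenvectorBasis i := by
    intro i
    have h := hH.mulVec_eigenvectorBasis i
    ext j
    have := congrFun h j
    simpa [toEuclideanLin_apply] using this
  have hray : ∀ w : EuclideanSpace ℝ (Fin n),
      ⟪w, toEuclideanLin M w⟫ ≤ lam * ‖w‖ ^ 2 := by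
    intro w
    set b := hH.eigenvectorBasis with hb
    calc ⟪w, toEuclideanLin M w⟫
        = ∑ i, ⟪w, b i⟫ * ⟪b i, toEuclideanLin M w⟫ :=
          (b.sum_inner_mul_inner w (toEuclideanLin M w)).symm
      _ = ∑ i, hH.eigenvalues i * (⟪w, b i⟫ * ⟪b i, w⟫) := by
          refine Finset.sum_congr rfl fun i _ => ?_
          rw [← hT (b i) w, hTb i, real_inner_smul_left]; ring
      _ ≤ ∑ i, lam * (⟪w, b i⟫ * ⟪b i, w⟫) := by
          refine Finset.sum_le_sum fun i _ => ?_
          have hnn : 0 ≤ ⟪w, b i⟫ * ⟪b i, w⟫ := by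
            rw [real_inner_comm (b i) w]; exact mul_self_nonneg _
          exact mul_le_mul_of_nonneg_right (heig_le i) hnn
      _ = lam * ‖w‖ ^ 2 := by
          rw [← Finset.mul_sum, b.sum_inner_mul_inner, real_inner_self_eq_norm_sq]
  have hadj : ∀ (u : EuclideanSpace ℝ (Fin p)) (w : EuclideanSpace ℝ (Fin n)),
      ⟪toEuclideanLin Aᵀ u, w⟫ = ⟪u, toEuclideanLin A w⟫ := by
    intro u w
    have h : toEuclideanLin Aᵀ = LinearMap.adjoint (toEuclideanLin A) := by
      rw [← Matrix.toEuclideanLin_conjTranspose_eq_adjoint,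
        conjTranspose_eq_transpose_of_trivial]
    rw [h, LinearMap.adjoint_inner_left]
  have hmul : ∀ w, toEuclideanLin M w = toEuclideanLin Aᵀ (toEuclideanLin A w) := by
    intro w
    ext j
    simp [hMdef, toEuclideanLin_apply, ← mulVec_mulVec]
  -- strong convexity step
  set x₁ := xstar y₁ with hx1
  set x₂ := xstar y₂ with hx2
  set c₁ := toEuclideanLin Aᵀ y₁ with hc1
  set c₂ := toEuclideanLin Aᵀ y₂ with hc2
  have h12 := strong_max_ineq f μ hsc c₁ x₁ (hxstar y₁) x₂
  have h21 := strong_max_ineq f μ hsc c₂ x₂ (hxstar y₂) x₁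
  have hkey : μ * ‖x₁ - x₂‖ ^ 2 ≤ ⟪c₁ - c₂, x₁ - x₂⟫ := by
    have e1 : ⟪c₁, x₂ - x₁⟫ = -⟪c₁, x₁ - x₂⟫ := by
      rw [← inner_neg_right]; congr 1; abel
    have e2 : ⟪c₁ - c₂, x₁ - x₂⟫ = ⟪c₁, x₁ - x₂⟫ - ⟪c₂, x₁ - x₂⟫ := inner_sub_left _ _ _
    have e3 : ‖x₂ - x₁‖ = ‖x₁ - x₂‖ := norm_sub_rev _ _
    rw [e3] at h12
    linarith [h12, h21, e1, e2]
  set u := y₁ - y₂ with hu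
  have hc : c₁ - c₂ = toEuclideanLin Aᵀ u := (map_sub _ _ _).symm
  rw [hc, hadj] at hkey
  have hv : toEuclideanLin A x₁ - toEuclideanLin A x₂ = toEuclideanLin A (x₁ - x₂) :=
    (map_sub _ _ _).symm
  rw [hv]
  set d := x₁ - x₂ with hd
  set v := toEuclideanLin A d with hvd
  have h3 : ‖v‖ ^ 2 ≤ lam * ‖d‖ ^ 2 := by
    have hh : ⟪d, toEuclideanLin M d⟫ = ‖v‖ ^ 2 := by
      rw [hmul d, real_inner_comm, hadj, real_inner_self_eq_norm_sq]
    have := hray d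
    rwa [hh] at this
  have h4 : μ * ‖d‖ ^ 2 ≤ ‖u‖ * ‖v‖ := hkey.trans (real_inner_le_norm u v)
  rcases eq_or_lt_of_le (norm_nonneg v) with h0 | h0
  · rw [← h0]
    exact mul_nonneg (div_nonneg hlam_nonneg hμ.le) (norm_nonneg u)
  · rw [div_mul_eq_mul_div, le_div_iff₀ hμ]
    nlinarith [mul_le_mul_of_nonneg_left h3 hμ.le, mul_le_mul_of_nonneg_left h4 hlam_nonneg,
      norm_nonneg u, norm_nonneg d, h0]
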